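/- Let M ∈ ℝ^{m×n}, let (A,B) be a bimatrix game with A + B = M and Nash equilibrium (x,y), write A = Â + 1γ1ᵀ + a1ᵀ + 1bᵀ in the normalized parameterization, and define C = Â + 1γ1ᵀ + c1ᵀ + 1dᵀ with c = ρ(Ay + x), d = σ(Bᵀx + y), where ρ(z) = z − 1(1ᵀz/m) and σ(w) = w − 1(1ᵀw/n). Then from (C, M−C) alone one can recover (A,B,x,y): applying the water-level decomposition of Lemma on c and d yields the same x, y, and the reconstruction formulas a = c − ρ(Ây + x), b = σ((M−Â)ᵀx + y) − d return the original A and B. In particular the map (A,B,x,y) ↦ (C, M−C) from the equilibrium correspondence E_M to the set of games with payoff sum M is injective. -/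

import Mathlib

open Matrix

def simplex (m : ℕ) : Set (Fin m → ℝ) := {x | (∀ i, 0 ≤ x i) ∧ ∑ i, x i = 1}

def isNash {m n : ℕ} (A B : Matrix (Fin m) (Fin n) ℝ)
    (x : Fin m → ℝ) (y : Fin n → ℝ) : Prop :=
  x ∈ simplex m ∧ y ∈ simplex n ∧
  (∀ x' ∈ simplex m, x' ⬝ᵥ A.mulVec y ≤ x ⬝ᵥ A.mulVec y) ∧
  (∀ y' ∈ simplex n, x ⬝ᵥ B.mulVec y' ≤ x ⬝ᵥ B.mulVec y)

noncomputable def gammaOf {m n : ℕ} (A : Matrix (Fin m) (Fin n) ℝ) : ℝ :=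
  (∑ i, ∑ j, A i j) / ((m : ℝ) * (n : ℝ))

noncomputable def aVec {m n : ℕ} (A : Matrix (Fin m) (Fin n) ℝ) : Fin m → ℝ :=
  fun i => (∑ j, A i j) / (n : ℝ) - gammaOf A

noncomputable def bVec {m n : ℕ} (A : Matrix (Fin m) (Fin n) ℝ) : Fin n → ℝ :=
  fun j => (∑ i, A i j) / (m : ℝ) - gammaOf A

noncomputable def hatOf {m n : ℕ} (A : Matrix (Fin m) (Fin n) ℝ) :
    Matrix (Fin m) (Fin n) ℝ :=
  Matrix.of fun i j => A i j - gammaOf A - aVec A i - bVec A j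

noncomputable def rho {m : ℕ} (z : Fin m → ℝ) : Fin m → ℝ := fun i => z i - (∑ k, z k) / (m : ℝ)

noncomputable def sigma' {n : ℕ} (w : Fin n → ℝ) : Fin n → ℝ := fun j => w j - (∑ l, w l) / (n : ℝ)

noncomputable def cVec {m n : ℕ} (A : Matrix (Fin m) (Fin n) ℝ)
    (x : Fin m → ℝ) (y : Fin n → ℝ) : Fin m → ℝ :=
  rho (A.mulVec y + x)

noncomputable def dVec {m n : ℕ} (M A : Matrix (Fin m) (Fin n) ℝ)
    (x : Fin m → ℝ) (y : Fin n → ℝ) : Fin n → ℝ :=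
  sigma' ((M - A)ᵀ.mulVec x + y)

noncomputable def Cmap {m n : ℕ} (M A : Matrix (Fin m) (Fin n) ℝ)
    (x : Fin m → ℝ) (y : Fin n → ℝ) : Matrix (Fin m) (Fin n) ℝ :=
  Matrix.of fun i j => hatOf A i j + gammaOf A + cVec A x y i + dVec M A x y j


section Aux

variable {m n : ℕ}

lemma sum_rho_eq (hm : (m:ℝ) ≠ 0) (z : Fin m → ℝ) : ∑ i, rho z i = 0 := by
  simp only [rho, Finset.sum_sub_distrib, Finset.sum_const, Finset.card_univ,
    Fintype.card_fin, nsmul_eq_mul]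
  field_simp
  ring

lemma sum_sigma_eq (hn : (n:ℝ) ≠ 0) (w : Fin n → ℝ) : ∑ j, sigma' w j = 0 := by
  simp only [sigma', Finset.sum_sub_distrib, Finset.sum_const, Finset.card_univ,
    Fintype.card_fin, nsmul_eq_mul]
  field_simp
  ring

lemma sum_aVec (hm : (m:ℝ) ≠ 0) (hn : (n:ℝ) ≠ 0) (A : Matrix (Fin m) (Fin n) ℝ) :
    ∑ i, aVec A i = 0 := by
  simp only [aVec, gammaOf, Finset.sum_sub_distrib, Finset.sum_const, Finset.card_univ,
    Fintype.card_fin, nsmul_eq_mul, ← Finset.sum_div]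
  field_simp
  ring

lemma sum_bVec (hm : (m:ℝ) ≠ 0) (hn : (n:ℝ) ≠ 0) (A : Matrix (Fin m) (Fin n) ℝ) :
    ∑ j, bVec A j = 0 := by
  simp only [bVec, gammaOf, Finset.sum_sub_distrib, Finset.sum_const, Finset.card_univ,
    Fintype.card_fin, nsmul_eq_mul, ← Finset.sum_div]
  rw [Finset.sum_comm]
  field_simp
  ring

lemma rowsum_hat (hm : (m:ℝ) ≠ 0) (hn : (n:ℝ) ≠ 0) (A : Matrix (Fin m) (Fin n) ℝ) (i : Fin m) :
    ∑ j, hatOf A i j = 0 := by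
  have hb := sum_bVec hm hn A
  simp only [hatOf, Matrix.of_apply, Finset.sum_sub_distrib, hb, sub_zero,
    Finset.sum_const, Finset.card_univ, Fintype.card_fin, nsmul_eq_mul, aVec]
  field_simp
  ring

lemma colsum_hat (hm : (m:ℝ) ≠ 0) (hn : (n:ℝ) ≠ 0) (A : Matrix (Fin m) (Fin n) ℝ) (j : Fin n) :
    ∑ i, hatOf A i j = 0 := by
  have ha := sum_aVec hm hn A
  simp only [hatOf, Matrix.of_apply, Finset.sum_sub_distrib, ha, sub_zero,
    Finset.sum_const, Finset.card_univ, Fintype.card_fin, nsmul_eq_mul, bVec]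
  field_simp
  ring

lemma simplex_single {m : ℕ} (k : Fin m) : Pi.single k (1:ℝ) ∈ simplex m := by
  constructor
  · intro i
    by_cases h : i = k <;> simp [Pi.single_apply, h]
  · simp [Pi.single_apply]

lemma support_max {m : ℕ} (w x : Fin m → ℝ) (hx : x ∈ simplex m)
    (hbest : ∀ x' ∈ simplex m, x' ⬝ᵥ w ≤ x ⬝ᵥ w)
    {i : Fin m} (hxi : x i ≠ 0) (k : Fin m) : w k ≤ w i := by
  obtain ⟨hx0, hx1⟩ := hx
  have hxi' : 0 < x i := lt_of_le_of_ne (hx0 i) (Ne.symm hxi)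
  have hall : ∀ l, w l ≤ x ⬝ᵥ w := by
    intro l
    have := hbest (Pi.single l 1) (simplex_single l)
    simpa [dotProduct, Pi.single_apply] using this
  have hi : x ⬝ᵥ w ≤ w i := by
    by_contra hcon
    push_neg at hcon
    have hlt : ∑ l, x l * w l < ∑ l, x l * (x ⬝ᵥ w) := by
      apply Finset.sum_lt_sum
      · intro l _
        exact mul_le_mul_of_nonneg_left (hall l) (hx0 l)
      · exact ⟨i, Finset.mem_univ i, mul_lt_mul_of_pos_left hcon hxi'⟩
    rw [← Finset.sum_mul, hx1, one_mul] at hlt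
    have hlt' : x ⬝ᵥ w < x ⬝ᵥ w := by simp only [dotProduct] at hlt; exact hlt
    exact lt_irrefl _ hlt'
  exact le_trans (hall k) hi

lemma water_formula {m : ℕ} (hm : 0 < m) (c x : Fin m → ℝ)
    (hx : x ∈ simplex m)
    (H : ∀ i, x i = 0 ∨ ∀ k, c k - x k ≤ c i - x i) :
    ∀ i, x i = max (c i - (Finset.univ.sup' (Finset.univ_nonempty_iff.2 ⟨⟨0, hm⟩⟩)
      (fun k => c k - x k))) 0 := by
  obtain ⟨hx0, _⟩ := hx
  set t := Finset.univ.sup' (Finset.univ_nonempty_iff.2 ⟨⟨0, hm⟩⟩) (fun k => c k - x k) with ht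
  intro i
  rcases H i with h0 | hmax
  · have h1 : c i - x i ≤ t := by
      rw [ht]; exact Finset.le_sup' (fun k => c k - x k) (Finset.mem_univ i)
    rw [h0] at h1 ⊢
    simp only [sub_zero] at h1
    rw [max_eq_right (by linarith)]
  · have h1 : t ≤ c i - x i := Finset.sup'_le _ _ (fun k _ => hmax k)
    have h2 : c i - x i ≤ t := by
      rw [ht]; exact Finset.le_sup' (fun k => c k - x k) (Finset.mem_univ i)
    have : c i - t = x i := by linarith
    rw [this, max_eq_left (hx0 i)]

lemma water_mono {m : ℕ} (c x x' : Fin m → ℝ) {t t' : ℝ} (htt : t ≤ t')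
    (hx : ∀ i, x i = max (c i - t) 0) (hx' : ∀ i, x' i = max (c i - t') 0)
    (hs : ∑ i, x i = ∑ i, x' i) : x = x' := by
  have hle : ∀ i ∈ Finset.univ, x' i ≤ x i := by
    intro i _
    rw [hx, hx']
    exact max_le_max (by linarith) le_rfl
  have := (Finset.sum_eq_sum_iff_of_le hle).1 hs.symm
  funext i
  exact (this i (Finset.mem_univ i)).symm

lemma water_unique {m : ℕ} (hm : 0 < m) (c x x' : Fin m → ℝ)
    (hx : x ∈ simplex m) (hx' : x' ∈ simplex m)
    (H : ∀ i, x i = 0 ∨ ∀ k, c k - x k ≤ c i - x i)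
    (H' : ∀ i, x' i = 0 ∨ ∀ k, c k - x' k ≤ c i - x' i) : x = x' := by
  have hf := water_formula hm c x hx H
  have hf' := water_formula hm c x' hx' H'
  have hs : ∑ i, x i = ∑ i, x' i := by rw [hx.2, hx'.2]
  rcases le_total (Finset.univ.sup' (Finset.univ_nonempty_iff.2 ⟨⟨0, hm⟩⟩) (fun k => c k - x k))
      (Finset.univ.sup' (Finset.univ_nonempty_iff.2 ⟨⟨0, hm⟩⟩) (fun k => c k - x' k)) with h | h
  · exact water_mono c x x' h hf hf' hs
  · exact (water_mono c x' x h hf' hf hs.symm).symm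

lemma hat_mulVec (A : Matrix (Fin m) (Fin n) ℝ) (y : Fin n → ℝ) (hy : ∑ j, y j = 1)
    (i : Fin m) :
    (hatOf A).mulVec y i
      = A.mulVec y i - gammaOf A - aVec A i - ∑ j, bVec A j * y j := by
  have hconst : ∀ c : ℝ, ∑ j, c * y j = c := fun c => by
    rw [← Finset.mul_sum, hy, mul_one]
  simp only [hatOf, Matrix.mulVec, dotProduct, Matrix.of_apply, sub_mul,
    Finset.sum_sub_distrib, hconst]

lemma hatT_mulVec (M A : Matrix (Fin m) (Fin n) ℝ) (x : Fin m → ℝ) (hx : ∑ i, x i = 1)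
    (j : Fin n) :
    (M - hatOf A)ᵀ.mulVec x j
      = (M - A)ᵀ.mulVec x j + gammaOf A + (∑ i, aVec A i * x i) + bVec A j := by
  have hconst : ∀ c : ℝ, ∑ i, c * x i = c := fun c => by
    rw [← Finset.mul_sum, hx, mul_one]
  simp only [hatOf, Matrix.mulVec, dotProduct, Matrix.transpose_apply,
    Matrix.sub_apply, Matrix.of_apply, sub_mul, Finset.sum_sub_distrib, hconst]
  ring

lemma aVec_recover (hm : (m:ℝ) ≠ 0) (hn : (n:ℝ) ≠ 0)
    (A : Matrix (Fin m) (Fin n) ℝ) (x : Fin m → ℝ) (y : Fin n → ℝ)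
    (hy : ∑ j, y j = 1) :
    aVec A = cVec A x y - rho ((hatOf A).mulVec y + x) := by
  have ha0 : ∑ k, aVec A k = 0 := sum_aVec hm hn A
  have hpt : ∀ k, ((hatOf A).mulVec y + x) k
      = (A.mulVec y + x) k - gammaOf A - (∑ j, bVec A j * y j) - aVec A k := by
    intro k
    simp only [Pi.add_apply, hat_mulVec A y hy]
    ring
  have hsum : ∑ k, ((hatOf A).mulVec y + x) k
      = ∑ k, (A.mulVec y + x) k - (m:ℝ) * gammaOf A - (m:ℝ) * (∑ j, bVec A j * y j) := by
    simp only [hpt, Finset.sum_sub_distrib, ha0, sub_zero, Finset.sum_const,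
      Finset.card_univ, Fintype.card_fin, nsmul_eq_mul]
  funext i
  simp only [cVec, rho, Pi.sub_apply, hsum, hpt i]
  field_simp
  ring

lemma bVec_recover (hm : (m:ℝ) ≠ 0) (hn : (n:ℝ) ≠ 0)
    (M A : Matrix (Fin m) (Fin n) ℝ) (x : Fin m → ℝ) (y : Fin n → ℝ)
    (hx : ∑ i, x i = 1) :
    bVec A = sigma' ((M - hatOf A)ᵀ.mulVec x + y) - dVec M A x y := by
  have hb0 : ∑ l, bVec A l = 0 := sum_bVec hm hn A
  have hpt : ∀ l, ((M - hatOf A)ᵀ.mulVec x + y) l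
      = ((M - A)ᵀ.mulVec x + y) l + gammaOf A + (∑ i, aVec A i * x i) + bVec A l := by
    intro l
    simp only [Pi.add_apply, hatT_mulVec M A x hx]
    ring
  have hsum : ∑ l, ((M - hatOf A)ᵀ.mulVec x + y) l
      = ∑ l, ((M - A)ᵀ.mulVec x + y) l + (n:ℝ) * gammaOf A
        + (n:ℝ) * (∑ i, aVec A i * x i) := by
    simp only [hpt, Finset.sum_add_distrib, hb0, add_zero, Finset.sum_const,
      Finset.card_univ, Fintype.card_fin, nsmul_eq_mul]
  funext j
  simp only [sigma', dVec, Pi.sub_apply, hsum, hpt j]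
  field_simp
  ring

lemma dot_col {m n : ℕ} (B : Matrix (Fin m) (Fin n) ℝ) (x : Fin m → ℝ) (y' : Fin n → ℝ) :
    x ⬝ᵥ B.mulVec y' = y' ⬝ᵥ Bᵀ.mulVec x := by
  rw [Matrix.dotProduct_mulVec, Matrix.mulVec_transpose, dotProduct_comm]

lemma param_unique {m n : ℕ} (hm : (m:ℝ) ≠ 0) (hn : (n:ℝ) ≠ 0)
    (H H' : Matrix (Fin m) (Fin n) ℝ) (g g' : ℝ) (c c' : Fin m → ℝ) (d d' : Fin n → ℝ)
    (hH1 : ∀ i, ∑ j, H i j = 0) (hH2 : ∀ j, ∑ i, H i j = 0)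
    (hH1' : ∀ i, ∑ j, H' i j = 0) (hH2' : ∀ j, ∑ i, H' i j = 0)
    (hc : ∑ i, c i = 0) (hc' : ∑ i, c' i = 0)
    (hd : ∑ j, d j = 0) (hd' : ∑ j, d' j = 0)
    (E : ∀ i j, H i j + g + c i + d j = H' i j + g' + c' i + d' j) :
    H = H' ∧ g = g' ∧ c = c' ∧ d = d' := by
  have h1 : ∀ i, g + c i = g' + c' i := by
    intro i
    have hs : ∑ j, (H i j + g + c i + d j) = ∑ j, (H' i j + g' + c' i + d' j) :=
      Finset.sum_congr rfl (fun j _ => E i j)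
    simp only [Finset.sum_add_distrib, hH1 i, hH1' i, hd, hd', Finset.sum_const,
      Finset.card_univ, Fintype.card_fin, nsmul_eq_mul, zero_add, add_zero] at hs
    have : (n:ℝ) * ((g + c i) - (g' + c' i)) = 0 := by ring_nf; linarith
    rcases mul_eq_zero.1 this with h | h
    · exact absurd h hn
    · linarith
  have h2 : ∀ j, g + d j = g' + d' j := by
    intro j
    have hs : ∑ i, (H i j + g + c i + d j) = ∑ i, (H' i j + g' + c' i + d' j) :=
      Finset.sum_congr rfl (fun i _ => E i j)
    simp only [Finset.sum_add_distrib, hH2 j, hH2' j, hc, hc', Finset.sum_const,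
      Finset.card_univ, Fintype.card_fin, nsmul_eq_mul, zero_add, add_zero] at hs
    have : (m:ℝ) * ((g + d j) - (g' + d' j)) = 0 := by ring_nf; linarith
    rcases mul_eq_zero.1 this with h | h
    · exact absurd h hm
    · linarith
  have hg : g = g' := by
    have hs : ∑ i, (g + c i) = ∑ i, (g' + c' i) := Finset.sum_congr rfl (fun i _ => h1 i)
    simp only [Finset.sum_add_distrib, hc, hc', Finset.sum_const, Finset.card_univ,
      Fintype.card_fin, nsmul_eq_mul, add_zero] at hs
    have : (m:ℝ) * (g - g') = 0 := by ring_nf; linarith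
    rcases mul_eq_zero.1 this with h | h
    · exact absurd h hm
    · linarith
  refine ⟨?_, hg, ?_, ?_⟩
  · ext i j
    have := E i j
    have e1 := h1 i
    have e2 := h2 j
    linarith
  · funext i
    have := h1 i
    linarith
  · funext j
    have := h2 j
    linarith

lemma part1 {m n : ℕ} (hm : 0 < m) (hn : 0 < n) (M : Matrix (Fin m) (Fin n) ℝ)
    (A B : Matrix (Fin m) (Fin n) ℝ) (x : Fin m → ℝ) (y : Fin n → ℝ)
    (hAB : A + B = M) (hN : isNash A B x y) :
    (∀ i, x i = 0 ∨ ∀ k, cVec A x y k - x k ≤ cVec A x y i - x i) ∧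
    (∀ j, y j = 0 ∨ ∀ l, dVec M A x y l - y l ≤ dVec M A x y j - y j) ∧
    aVec A = cVec A x y - rho ((hatOf A).mulVec y + x) ∧
    bVec A = sigma' ((M - hatOf A)ᵀ.mulVec x + y) - dVec M A x y := by
  have hmR : (m:ℝ) ≠ 0 := Nat.cast_ne_zero.2 hm.ne'
  have hnR : (n:ℝ) ≠ 0 := Nat.cast_ne_zero.2 hn.ne'
  obtain ⟨hx, hy, hrow, hcol⟩ := hN
  have hB : B = M - A := eq_sub_of_add_eq' hAB
  rw [hB] at hcol
  refine ⟨?_, ?_, aVec_recover hmR hnR A x y hy.2, bVec_recover hmR hnR M A x y hx.2⟩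
  · intro i
    by_cases hxi : x i = 0
    · exact Or.inl hxi
    · right
      intro k
      have hw := support_max (A.mulVec y) x hx hrow hxi k
      simp only [cVec, rho, Pi.add_apply]
      linarith
  · intro j
    by_cases hyj : y j = 0
    · exact Or.inl hyj
    · right
      intro l
      have hcol' : ∀ y' ∈ simplex n,
          y' ⬝ᵥ (M - A)ᵀ.mulVec x ≤ y ⬝ᵥ (M - A)ᵀ.mulVec x := by
        intro y' h
        rw [← dot_col, ← dot_col]
        exact hcol y' h
      have hw := support_max ((M - A)ᵀ.mulVec x) y hy hcol' hyj l
      simp only [dVec, sigma', Pi.add_apply]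
      linarith

end Aux

theorem stmt18 {m n : ℕ} (hm : 0 < m) (hn : 0 < n) (M : Matrix (Fin m) (Fin n) ℝ) :
    (∀ (A B : Matrix (Fin m) (Fin n) ℝ) (x : Fin m → ℝ) (y : Fin n → ℝ),
      A + B = M → isNash A B x y →
        (∀ i, x i = 0 ∨ ∀ k, cVec A x y k - x k ≤ cVec A x y i - x i) ∧
        (∀ j, y j = 0 ∨ ∀ l, dVec M A x y l - y l ≤ dVec M A x y j - y j) ∧
        aVec A = cVec A x y - rho ((hatOf A).mulVec y + x) ∧
        bVec A = sigma' ((M - hatOf A)ᵀ.mulVec x + y) - dVec M A x y) ∧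
    (∀ (A B : Matrix (Fin m) (Fin n) ℝ) (x : Fin m → ℝ) (y : Fin n → ℝ)
       (A' B' : Matrix (Fin m) (Fin n) ℝ) (x' : Fin m → ℝ) (y' : Fin n → ℝ),
      A + B = M → A' + B' = M → isNash A B x y → isNash A' B' x' y' →
      Cmap M A x y = Cmap M A' x' y' →
      A = A' ∧ B = B' ∧ x = x' ∧ y = y') := by
  have hmR : (m:ℝ) ≠ 0 := Nat.cast_ne_zero.2 hm.ne'
  have hnR : (n:ℝ) ≠ 0 := Nat.cast_ne_zero.2 hn.ne'
  constructor
  · intro A B x y hAB hN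
    exact part1 hm hn M A B x y hAB hN
  · intro A B x y A' B' x' y' hAB hAB' hN hN' hC
    obtain ⟨P1a, P1b, P1c, P1d⟩ := part1 hm hn M A B x y hAB hN
    obtain ⟨P1a', P1b', P1c', P1d'⟩ := part1 hm hn M A' B' x' y' hAB' hN'
    have E : ∀ i j, hatOf A i j + gammaOf A + cVec A x y i + dVec M A x y j
        = hatOf A' i j + gammaOf A' + cVec A' x' y' i + dVec M A' x' y' j := by
      intro i j
      have := congrFun (congrFun hC i) j
      simpa [Cmap] using this
    have hcsum : ∑ i, cVec A x y i = 0 := sum_rho_eq hmR (A.mulVec y + x)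
    have hcsum' : ∑ i, cVec A' x' y' i = 0 := sum_rho_eq hmR (A'.mulVec y' + x')
    have hdsum : ∑ j, dVec M A x y j = 0 := sum_sigma_eq hnR ((M - A)ᵀ.mulVec x + y)
    have hdsum' : ∑ j, dVec M A' x' y' j = 0 := sum_sigma_eq hnR ((M - A')ᵀ.mulVec x' + y')
    obtain ⟨hHat, hg, hcc, hdd⟩ := param_unique hmR hnR (hatOf A) (hatOf A')
      (gammaOf A) (gammaOf A') (cVec A x y) (cVec A' x' y') (dVec M A x y) (dVec M A' x' y')
      (rowsum_hat hmR hnR A) (colsum_hat hmR hnR A)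
      (rowsum_hat hmR hnR A') (colsum_hat hmR hnR A')
      hcsum hcsum' hdsum hdsum' E
    have hxx : x = x' := by
      apply water_unique hm (cVec A x y) x x' hN.1 hN'.1 P1a
      rw [hcc]
      exact P1a'
    have hyy : y = y' := by
      apply water_unique hn (dVec M A x y) y y' hN.2.1 hN'.2.1 P1b
      rw [hdd]
      exact P1b'
    have haa : aVec A = aVec A' := by
      rw [aVec_recover hmR hnR A x y hN.2.1.2, aVec_recover hmR hnR A' x' y' hN'.2.1.2,
        hcc, hHat, hxx, hyy]
    have hbb : bVec A = bVec A' := by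
      rw [bVec_recover hmR hnR M A x y hN.1.2, bVec_recover hmR hnR M A' x' y' hN'.1.2,
        hdd, hHat, hxx, hyy]
    have hA : A = A' := by
      have dec : ∀ (X : Matrix (Fin m) (Fin n) ℝ) i j,
          X i j = hatOf X i j + gammaOf X + aVec X i + bVec X j := by
        intro X i j
        simp only [hatOf, Matrix.of_apply]
        ring
      ext i j
      rw [dec A, dec A', hHat, hg, haa, hbb]
    refine ⟨hA, ?_, hxx, hyy⟩
    have hB : B = M - A := eq_sub_of_add_eq' hAB
    have hB' : B' = M - A' := eq_sub_of_add_eq' hAB'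
    rw [hB, hB', hA]
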